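/- Let O be a d×d Hermitian matrix with d ≥ 2 and O₀ = O − (tr(O)/d)I. Taking σ = I/d (the maximally mixed state), the DDB shadow variance at σ satisfies ‖O₀‖²_{I/d} ≤ 2·tr(O₀²). Explicitly: (4d/d)∑_k tr²(oP_k) + (2d/d)∑_{0≤j<k≤d−1}∑_±[tr²(oP^±_{jk}) + tr²(oQ^±_{jk})] ≤ 2·tr(O₀²), where o = O₀ − ((d−1)/d)∑_k tr(O₀P_k)P_k. -/
import Mathlib


open Matrix Complex BigOperators

noncomputable section

/-- computational basis vector `|t⟩` in `ℂ^d`. -/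
def ket (d : ℕ) (t : Fin d) : Fin d → ℂ := fun i => if i = t then 1 else 0

/-- rank-one projector `|v⟩⟨v|`. -/
def proj {d : ℕ} (v : Fin d → ℂ) : Matrix (Fin d) (Fin d) ℂ := Matrix.vecMulVec v (star v)

/-- `P_t = |t⟩⟨t|`. -/
def Pk {d : ℕ} (t : Fin d) : Matrix (Fin d) (Fin d) ℂ := proj (ket d t)

def phiP {d : ℕ} (j k : Fin d) : Fin d → ℂ := fun i => (ket d j i + ket d k i) / ((Real.sqrt 2 : ℝ) : ℂ)
def phiM {d : ℕ} (j k : Fin d) : Fin d → ℂ := fun i => (ket d j i - ket d k i) / ((Real.sqrt 2 : ℝ) : ℂ)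
def psiP {d : ℕ} (j k : Fin d) : Fin d → ℂ := fun i => (ket d j i + Complex.I * ket d k i) / ((Real.sqrt 2 : ℝ) : ℂ)
def psiM {d : ℕ} (j k : Fin d) : Fin d → ℂ := fun i => (ket d j i - Complex.I * ket d k i) / ((Real.sqrt 2 : ℝ) : ℂ)

/-- the DDB snapshot projectors. -/
def SDDB (d : ℕ) : Set (Matrix (Fin d) (Fin d) ℂ) :=
  {M | (∃ t, M = Pk t) ∨
    ∃ j k : Fin d, j < k ∧
      (M = proj (phiP j k) ∨ M = proj (phiM j k) ∨ M = proj (psiP j k) ∨ M = proj (psiM j k))}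

/-- the DDB states (as vectors). -/
def ddbStates (d : ℕ) : Set (Fin d → ℂ) :=
  {v | (∃ t, v = ket d t) ∨
    ∃ j k : Fin d, j ≠ k ∧
      (v = phiP j k ∨ v = phiM j k ∨ v = psiP j k ∨ v = psiM j k)}

/-- the DDB measurement channel `M`. -/
def Mchan {d : ℕ} (ρ : Matrix (Fin d) (Fin d) ℂ) : Matrix (Fin d) (Fin d) ℂ :=
  ((1 : ℂ) / (2 * d)) • (ρ + (Matrix.trace ρ) • (1 : Matrix (Fin d) (Fin d) ℂ)
      + ((d : ℂ) - 1) • ∑ k, ρ k k • Pk k)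

/-- the inverse reconstruction channel `M⁻¹`. -/
def Minv {d : ℕ} (ρ : Matrix (Fin d) (Fin d) ℂ) : Matrix (Fin d) (Fin d) ℂ :=
  (2 * (d : ℂ)) • (ρ - (((d : ℂ) - 1) / d) • ∑ k, (Matrix.trace (ρ * Pk k)) • Pk k)
    - ((Matrix.trace ρ) / d) • (1 : Matrix (Fin d) (Fin d) ℂ)

/- auxiliary lemmas -/

lemma trace_mul_proj {d} (A : Matrix (Fin d) (Fin d) ℂ) (v : Fin d → ℂ) :
    Matrix.trace (A * proj v) = ∑ i, ∑ j, A i j * (v j * star (v i)) := by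
  simp [Matrix.trace, Matrix.mul_apply, proj, Matrix.vecMulVec_apply, Matrix.diag]

lemma sqrt2_sq : ((Real.sqrt 2 : ℝ) : ℂ) * ((Real.sqrt 2 : ℝ) : ℂ) = 2 := by
  norm_cast
  exact Real.mul_self_sqrt (by norm_num)

lemma trace_mul_Pk {d} (A : Matrix (Fin d) (Fin d) ℂ) (t : Fin d) :
    Matrix.trace (A * Pk t) = A t t := by
  rw [Pk, trace_mul_proj]
  simp [ket, apply_ite (star : ℂ → ℂ), mul_ite, Finset.sum_ite_eq']

def wvec {d : ℕ} (j k : Fin d) (z : ℂ) : Fin d → ℂ :=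
  fun i => (ket d j i + z * ket d k i) / ((Real.sqrt 2 : ℝ) : ℂ)

lemma wvec_mul_star {d} (j k : Fin d) (z : ℂ) (a b : Fin d) :
    wvec j k z a * star (wvec j k z b)
      = (ket d j a + z * ket d k a) * (ket d j b + star z * ket d k b) / 2 := by
  have hket : ∀ t i : Fin d, star (ket d t i) = ket d t i := by
    intro t i; simp [ket, apply_ite (star : ℂ → ℂ)]
  rw [wvec, wvec, star_div₀, star_add, star_mul', hket, hket, div_mul_div_comm,
    RCLike.star_def, Complex.conj_ofReal, sqrt2_sq]

lemma trace_mul_wproj {d} (A : Matrix (Fin d) (Fin d) ℂ) (j k : Fin d) (z : ℂ) :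
    Matrix.trace (A * proj (wvec j k z))
      = (A j j + z * A j k + star z * A k j + z * star z * A k k) / 2 := by
  rw [trace_mul_proj]
  simp only [wvec_mul_star, ket, mul_div_assoc', mul_add, add_mul, mul_ite, ite_mul,
    mul_one, mul_zero, zero_mul, one_mul, Finset.sum_div, Finset.sum_add_distrib,
    Finset.sum_ite_eq', Finset.mem_univ, if_true, Finset.sum_ite_irrel, Finset.sum_const_zero]
  simp only [← Finset.sum_div, Finset.sum_add_distrib, Finset.sum_ite_irrel,
    Finset.sum_const_zero, Finset.sum_ite_eq', Finset.mem_univ, if_true]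
  ring

lemma phiP_eq {d} (j k : Fin d) : phiP j k = wvec j k 1 := by
  funext i; simp [phiP, wvec]
lemma phiM_eq {d} (j k : Fin d) : phiM j k = wvec j k (-1) := by
  funext i; simp [phiM, wvec, sub_eq_add_neg]
lemma psiP_eq {d} (j k : Fin d) : psiP j k = wvec j k Complex.I := by
  funext i; simp [psiP, wvec]
lemma psiM_eq {d} (j k : Fin d) : psiM j k = wvec j k (-Complex.I) := by
  funext i; simp [psiM, wvec, sub_eq_add_neg]

lemma sum_pk_apply {d} (c : Fin d → ℂ) (x y : Fin d) :
    (∑ t, c t • Pk t) x y = if x = y then c x else 0 := by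
  rw [Matrix.sum_apply]
  have h1 : ∀ t, (c t • Pk t) x y = if x = t ∧ y = t then c t else 0 := by
    intro t
    by_cases hx : x = t <;> by_cases hy : y = t <;>
      simp [Pk, proj, Matrix.vecMulVec_apply, ket, hx, hy, Matrix.smul_apply]
  rw [Finset.sum_congr rfl fun t _ => h1 t]
  rcases eq_or_ne x y with rfl | hxy
  · simp [Finset.sum_ite_eq]
  · rw [if_neg hxy]
    apply Finset.sum_eq_zero
    intro t _
    rw [if_neg]
    rintro ⟨rfl, rfl⟩
    exact hxy rfl

/-- pair-sum combinatorics: summing `f p.1 p.2 + f p.2 p.1` over `p.1 < p.2`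
equals summing `f p.1 p.2` over `p.1 ≠ p.2`. -/
lemma sum_pairs_lt {d} (f : Fin d → Fin d → ℝ) :
    ∑ p ∈ Finset.univ.filter (fun p : Fin d × Fin d => p.1 < p.2), (f p.1 p.2 + f p.2 p.1)
      = ∑ p ∈ Finset.univ.filter (fun p : Fin d × Fin d => p.1 ≠ p.2), f p.1 p.2 := by
  have hsplit : Finset.univ.filter (fun p : Fin d × Fin d => p.1 ≠ p.2)
      = (Finset.univ.filter (fun p : Fin d × Fin d => p.1 < p.2)) ∪
        (Finset.univ.filter (fun p : Fin d × Fin d => p.2 < p.1)) := by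
    ext p
    simp only [Finset.mem_filter, Finset.mem_union, Finset.mem_univ, true_and]
    constructor
    · intro h; exact h.lt_or_gt
    · rintro (h | h)
      · exact h.ne
      · exact h.ne'
  have hdisj : Disjoint (Finset.univ.filter (fun p : Fin d × Fin d => p.1 < p.2))
      (Finset.univ.filter (fun p : Fin d × Fin d => p.2 < p.1)) := by
    rw [Finset.disjoint_filter]
    intro p _ h1 h2
    exact absurd h2 (not_lt.2 h1.le)
  rw [hsplit, Finset.sum_union hdisj, Finset.sum_add_distrib]
  congr 1
  exact Finset.sum_nbij' (i := Prod.swap) (j := Prod.swap)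
    (by intro p hp; simp only [Finset.mem_filter, Finset.mem_univ, true_and] at hp ⊢; exact hp)
    (by intro p hp; simp only [Finset.mem_filter, Finset.mem_univ, true_and] at hp ⊢; exact hp)
    (by intro p _; simp) (by intro p _; simp) (by intro p _; rfl)

lemma sum_ne_left {d} (hd : 1 ≤ d) (g : Fin d → ℝ) :
    ∑ p ∈ Finset.univ.filter (fun p : Fin d × Fin d => p.1 ≠ p.2), g p.1
      = ((d : ℝ) - 1) * ∑ t, g t := by
  rw [Finset.sum_filter, ← Finset.univ_product_univ, Finset.sum_product]
  have hinner : ∀ j : Fin d, (∑ k, if j ≠ k then g j else 0) = ((d : ℝ) - 1) * g j := by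
    intro j
    rw [← Finset.sum_filter, Finset.filter_ne, Finset.sum_const, Finset.card_erase_of_mem
      (Finset.mem_univ j), Finset.card_univ, Fintype.card_fin, nsmul_eq_mul]
    rw [Nat.cast_sub hd]
    norm_num
  rw [Finset.sum_congr rfl (fun j _ => hinner j), ← Finset.mul_sum]

theorem stmt11 (d : ℕ) (hd : 2 ≤ d) (O O₀ o : Matrix (Fin d) (Fin d) ℂ)
    (hO : O.IsHermitian)
    (hO₀ : O₀ = O - (Matrix.trace O / d) • (1 : Matrix (Fin d) (Fin d) ℂ))
    (ho : o = O₀ - (((d : ℂ) - 1) / d) • ∑ t, (Matrix.trace (O₀ * Pk t)) • Pk t) :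
    4 * (∑ t, ((Matrix.trace (o * Pk t)).re)^2)
      + 2 * (∑ p ∈ Finset.univ.filter (fun p : Fin d × Fin d => p.1 < p.2), (((Matrix.trace (o * proj (phiP p.1 p.2))).re)^2 + ((Matrix.trace (o * proj (phiM p.1 p.2))).re)^2 + ((Matrix.trace (o * proj (psiP p.1 p.2))).re)^2 + ((Matrix.trace (o * proj (psiM p.1 p.2))).re)^2))
    ≤ 2 * (Matrix.trace (O₀ * O₀)).re := by
  have hdn : d ≠ 0 := by omega
  have hd0 : (0:ℝ) < (d:ℝ) := by exact_mod_cast Nat.pos_of_ne_zero hdn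
  have hdR : (d:ℝ) ≠ 0 := ne_of_gt hd0
  have hdC : (d:ℂ) ≠ 0 := Nat.cast_ne_zero.2 hdn
  have hd2 : (2:ℝ) ≤ (d:ℝ) := by exact_mod_cast hd
  -- O₀ is Hermitian
  have htr : star (Matrix.trace O) = Matrix.trace O := by
    rw [← Matrix.trace_conjTranspose, hO.eq]
  have hH : O₀.IsHermitian := by
    rw [hO₀]
    apply Matrix.IsHermitian.sub hO
    unfold Matrix.IsHermitian
    rw [Matrix.conjTranspose_smul, Matrix.conjTranspose_one, star_div₀, htr, star_natCast]
  have hsym : ∀ i j, O₀ j i = star (O₀ i j) := fun i j => (hH.apply j i).symm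
  set a : Fin d → ℝ := fun t => (O₀ t t).re with ha
  have hre : ∀ t, O₀ t t = ((a t : ℝ) : ℂ) := by
    intro t
    exact (Complex.conj_eq_iff_re.mp (hsym t t).symm).symm
  set n : Fin d → Fin d → ℝ := fun i j => Complex.normSq (O₀ i j) with hn
  have hnsym : ∀ i j, n j i = n i j := by
    intro i j; simp only [hn]; rw [hsym i j, RCLike.star_def, Complex.normSq_conj]
  -- entries of o
  have hoe : ∀ x y, o x y = O₀ x y - ((d:ℂ)-1)/d * (if x = y then O₀ x x else 0) := by
    intro x y
    rw [ho]
    simp only [Matrix.sub_apply, Matrix.smul_apply, smul_eq_mul, trace_mul_Pk, sum_pk_apply]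
  have hodiag : ∀ t, o t t = O₀ t t / d := by
    intro t
    rw [hoe, if_pos rfl]
    field_simp
    ring
  have hooff : ∀ x y, x ≠ y → o x y = O₀ x y := by
    intro x y h
    rw [hoe, if_neg h]
    ring
  -- diagonal trace values
  have htP : ∀ t, (Matrix.trace (o * Pk t)).re = a t / d := by
    intro t
    rw [trace_mul_Pk, hodiag t, hre t]
    simp
  -- pair trace values
  have hpair : ∀ j k : Fin d, j ≠ k →
      ((Matrix.trace (o * proj (phiP j k))).re)^2 + ((Matrix.trace (o * proj (phiM j k))).re)^2
        + ((Matrix.trace (o * proj (psiP j k))).re)^2 + ((Matrix.trace (o * proj (psiM j k))).re)^2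
      = ((a j + a k)/d)^2 + 2 * n j k := by
    intro j k hjk
    rw [phiP_eq, phiM_eq, psiP_eq, psiM_eq, trace_mul_wproj, trace_mul_wproj, trace_mul_wproj,
      trace_mul_wproj, hodiag j, hodiag k, hooff j k hjk, hooff k j hjk.symm, hsym j k,
      hre j, hre k]
    simp only [hn, Complex.normSq_apply, star_one, one_mul, mul_one, star_neg, neg_mul,
      mul_neg, neg_neg, Complex.star_def, Complex.conj_I, Complex.I_mul_I,
      Complex.div_ofNat_re, Complex.add_re, Complex.sub_re, Complex.neg_re, Complex.mul_re,
      Complex.I_re, Complex.I_im, Complex.conj_re, Complex.conj_im, Complex.one_re,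
      Complex.one_im, Complex.div_natCast_re, Complex.div_natCast_im, Complex.ofReal_re,
      Complex.ofReal_im]
    field_simp
    ring
  -- RHS
  have hRHS : (Matrix.trace (O₀ * O₀)).re = ∑ i, ∑ j, n i j := by
    simp only [Matrix.trace, Matrix.diag, Matrix.mul_apply]
    rw [Complex.re_sum]
    refine Finset.sum_congr rfl fun i _ => ?_
    rw [Complex.re_sum]
    refine Finset.sum_congr rfl fun j _ => ?_
    rw [hsym i j, RCLike.star_def, Complex.mul_conj, Complex.ofReal_re]
  have hdiagsum : ∑ p ∈ Finset.univ.filter (fun p : Fin d × Fin d => p.1 = p.2), n p.1 p.2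
      = ∑ t, (a t)^2 := by
    refine Finset.sum_nbij' (i := fun p => p.1) (j := fun t => (t, t)) ?_ ?_ ?_ ?_ ?_
    · intro p _; exact Finset.mem_univ _
    · intro t _; simp
    · intro p hp
      simp only [Finset.mem_filter, Finset.mem_univ, true_and] at hp
      exact Prod.ext rfl hp
    · intro t _; rfl
    · intro p hp
      simp only [Finset.mem_filter, Finset.mem_univ, true_and] at hp
      simp only [hn, ← hp, hre p.1, Complex.normSq_ofReal]
      ring
  have hsplit : ∑ i, ∑ j, n i j
      = (∑ t, (a t)^2) + ∑ p ∈ Finset.univ.filter (fun p : Fin d × Fin d => p.1 ≠ p.2), n p.1 p.2 := by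
    rw [← Finset.sum_product', Finset.univ_product_univ,
      ← Finset.sum_filter_add_sum_filter_not Finset.univ (fun p : Fin d × Fin d => p.1 = p.2),
      hdiagsum]
  -- abbreviations
  set Sa : ℝ := ∑ t, (a t)^2 with hSa_def
  set Sn : ℝ := ∑ p ∈ Finset.univ.filter (fun p : Fin d × Fin d => p.1 < p.2), n p.1 p.2 with hSn_def
  set Sp : ℝ := ∑ p ∈ Finset.univ.filter (fun p : Fin d × Fin d => p.1 < p.2), (a p.1 + a p.2)^2 with hSp_def
  have hSa0 : 0 ≤ Sa := Finset.sum_nonneg fun t _ => sq_nonneg _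
  have hSn0 : 0 ≤ Sn := Finset.sum_nonneg fun p _ => Complex.normSq_nonneg _
  have hTn : ∑ p ∈ Finset.univ.filter (fun p : Fin d × Fin d => p.1 ≠ p.2), n p.1 p.2 = 2 * Sn := by
    rw [← sum_pairs_lt, hSn_def, Finset.mul_sum]
    refine Finset.sum_congr rfl fun p _ => ?_
    rw [hnsym]
    ring
  -- LHS first term
  have e1 : (∑ t, ((Matrix.trace (o * Pk t)).re)^2) = Sa / (d:ℝ)^2 := by
    rw [hSa_def, Finset.sum_div]
    refine Finset.sum_congr rfl fun t _ => ?_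
    rw [htP t, div_pow]
  -- LHS second term
  have e2 : (∑ p ∈ Finset.univ.filter (fun p : Fin d × Fin d => p.1 < p.2),
        (((Matrix.trace (o * proj (phiP p.1 p.2))).re)^2 + ((Matrix.trace (o * proj (phiM p.1 p.2))).re)^2 + ((Matrix.trace (o * proj (psiP p.1 p.2))).re)^2 + ((Matrix.trace (o * proj (psiM p.1 p.2))).re)^2))
      = Sp / (d:ℝ)^2 + 2 * Sn := by
    rw [hSp_def, hSn_def, Finset.sum_div, Finset.mul_sum, ← Finset.sum_add_distrib]
    refine Finset.sum_congr rfl fun p hp => ?_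
    simp only [Finset.mem_filter, Finset.mem_univ, true_and] at hp
    rw [hpair p.1 p.2 hp.ne, div_pow]
  -- bound on Sp
  have hSp : Sp ≤ 2 * ((d:ℝ) - 1) * Sa := by
    have step1 : Sp ≤ ∑ p ∈ Finset.univ.filter (fun p : Fin d × Fin d => p.1 < p.2),
        (2 * (a p.1)^2 + 2 * (a p.2)^2) := by
      rw [hSp_def]
      refine Finset.sum_le_sum fun p _ => ?_
      nlinarith [sq_nonneg (a p.1 - a p.2)]
    have step2 : ∑ p ∈ Finset.univ.filter (fun p : Fin d × Fin d => p.1 < p.2),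
        (2 * (a p.1)^2 + 2 * (a p.2)^2) = 2 * ((d:ℝ) - 1) * Sa := by
      have h2' : (∑ p ∈ Finset.univ.filter (fun p : Fin d × Fin d => p.1 < p.2),
          (2 * (a p.1)^2 + 2 * (a p.2)^2))
          = ∑ p ∈ Finset.univ.filter (fun p : Fin d × Fin d => p.1 ≠ p.2), 2 * (a p.1)^2 :=
        sum_pairs_lt (fun j k : Fin d => 2 * (a j)^2)
      have h3' : (∑ p ∈ Finset.univ.filter (fun p : Fin d × Fin d => p.1 ≠ p.2), 2 * (a p.1)^2)
          = ((d:ℝ) - 1) * ∑ t, 2 * (a t)^2 := sum_ne_left (show 1 ≤ d by omega) (fun t => 2 * (a t)^2)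
      have h4' : ∑ t, 2 * (a t)^2 = 2 * Sa := by
        rw [hSa_def, Finset.mul_sum]
      rw [h2', h3', h4']
      ring
    exact step1.trans_eq step2
  -- put it together
  rw [e1, e2, hRHS, hsplit, hTn]
  have key : 4 * (Sa / (d:ℝ)^2) + 2 * (Sp / (d:ℝ)^2) ≤ 2 * Sa := by
    have h1 : 4 * (Sa / (d:ℝ)^2) + 2 * (Sp / (d:ℝ)^2) = (4 * Sa + 2 * Sp) / (d:ℝ)^2 := by ring
    rw [h1, div_le_iff₀ (by positivity)]
    nlinarith [mul_nonneg (mul_nonneg hSa0 hd0.le) (sub_nonneg.2 hd2), hSp, hSa0]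
  linarith [key]

end
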